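/- Let G be a finite abelian group and C an Abelian code in F_q[G], i.e. an ideal of the group algebra F_q[G]. Then C is μ_{−1}-LCD if and only if C is generated by an idempotent, i.e. C = F_q[G]·e for some e ∈ F_q[G] with e² = e. -/

import Mathlib

open scoped BigOperators

/-- The map `μ_{-1}` on a group algebra, sending `∑ a_g g` to `∑ a_{g⁻¹} g`. -/
noncomputable def gaMu {F : Type*} [Field F] {G : Type*} [CommGroup G]
    (a : MonoidAlgebra F G) : MonoidAlgebra F G :=
  MonoidAlgebra.ofCoeff (Finsupp.equivMapDomain (Equiv.inv G) a.coeff)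

/-- The Euclidean dual of a subset of the group algebra `F[G]`, with respect to the
inner product `<∑ a_g g, ∑ b_g g> = ∑ g, a_g b_g`. -/
def gaDual {F : Type*} [Field F] {G : Type*} [CommGroup G] [Fintype G]
    (C : Set (MonoidAlgebra F G)) : Set (MonoidAlgebra F G) :=
  {b | ∀ c ∈ C, ∑ g : G, b.coeff g * c.coeff g = 0}

section aux

set_option linter.unusedSectionVars false

variable {F : Type*} [Field F] {G : Type*} [CommGroup G] [Fintype G]

lemma gaMu_apply (c : MonoidAlgebra F G) (g : G) : (gaMu c).coeff g = c.coeff g⁻¹ := rfl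

lemma key_sum (b c : MonoidAlgebra F G) :
    ∑ g : G, b.coeff g * (gaMu c).coeff g = (b * c).coeff 1 := by
  rw [MonoidAlgebra.coeff_mul_antidiag b c 1
    (Finset.univ.map ⟨fun g : G => (g, g⁻¹), (show Function.Injective (fun g : G => (g, g⁻¹)) from
      fun x y h => congrArg Prod.fst h)⟩)
    (by
      intro p
      simp only [Finset.mem_map, Finset.mem_univ, true_and, Function.Embedding.coeFn_mk]
      constructor
      · rintro ⟨g, rfl⟩; simp
      · intro h; exact ⟨p.1, by rw [Prod.ext_iff]; exact ⟨rfl, by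
          simpa [eq_comm, eq_inv_iff_mul_eq_one, mul_comm] using h⟩⟩)]
  rw [Finset.sum_map]
  rfl

/-- The bilinear form `B a c = (a*c)(1)` on the group algebra. -/
noncomputable def gaB : LinearMap.BilinForm F (MonoidAlgebra F G) :=
  LinearMap.mk₂ F (fun a c => (a * c).coeff 1)
    (fun a b c => by simp only [add_mul]; exact Finsupp.add_apply _ _ _)
    (fun r a c => by simp only [smul_mul_assoc]; exact Finsupp.smul_apply _ _ _)
    (fun a b c => by simp only [mul_add]; exact Finsupp.add_apply _ _ _)
    (fun r a c => by simp only [mul_smul_comm]; exact Finsupp.smul_apply _ _ _)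

lemma gaB_apply (a c : MonoidAlgebra F G) : gaB a c = (a * c).coeff 1 := rfl

lemma gaB_symm (a c : MonoidAlgebra F G) : gaB a c = gaB c a := by
  simp [gaB_apply, mul_comm]

lemma gaB_refl : (gaB (F := F) (G := G)).IsRefl := fun a c h => by
  rwa [gaB_symm]

lemma gaB_mul_single (a : MonoidAlgebra F G) (g : G) :
    gaB a (MonoidAlgebra.single g (1 : F)) = a.coeff g⁻¹ := by
  rw [gaB_apply, MonoidAlgebra.coeff_mul_single_apply]
  simp

lemma gaB_nondeg : (gaB (F := F) (G := G)).Nondegenerate := by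
  refine (LinearMap.IsRefl.nondegenerate_iff_separatingLeft
    (show LinearMap.IsRefl (gaB (F := F) (G := G)) from gaB_refl)).2 ?_
  intro a h
  ext g
  have := h (MonoidAlgebra.single g⁻¹ 1)
  rwa [gaB_mul_single, inv_inv] at this

lemma mem_gaDual_iff (C : Ideal (MonoidAlgebra F G)) (b : MonoidAlgebra F G) :
    b ∈ gaDual (gaMu '' (C : Set (MonoidAlgebra F G))) ↔ ∀ c ∈ C, gaB b c = 0 := by
  constructor
  · intro h c hc
    have := h (gaMu c) ⟨c, hc, rfl⟩
    rwa [key_sum] at this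
  · rintro h _ ⟨c, hc, rfl⟩
    rw [key_sum]
    exact h c hc

end aux

/-- Let `G` be a finite abelian group and `C` an Abelian code in `F_q[G]` (an ideal of
the group algebra).  Then `C` is `μ_{-1}`-LCD, i.e. `C ∩ (μ_{-1}(C))^⊥ = {0}`, if and
only if `C` is generated by an idempotent. -/
theorem abelian_code_mu_neg_one_lcd_iff_idempotent
    {F : Type*} [Field F] {G : Type*} [CommGroup G] [Fintype G]
    (C : Ideal (MonoidAlgebra F G)) :
    (C : Set (MonoidAlgebra F G)) ∩ gaDual (gaMu '' (C : Set (MonoidAlgebra F G))) = {0} ↔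
      ∃ e : MonoidAlgebra F G, e * e = e ∧ C = Ideal.span {e} := by
  have hFD : FiniteDimensional F (MonoidAlgebra F G) :=
    Module.Finite.equiv ((Finsupp.linearEquivFunOnFinite F F G).symm.trans
      (MonoidAlgebra.coeffLinearEquiv F).symm)
  constructor
  · intro h
    -- the orthogonal complement of C w.r.t. gaB
    set D := gaB.orthogonal (C.restrictScalars F) with hD
    have hdisj : Disjoint (C.restrictScalars F) D := by
      rw [disjoint_iff, eq_bot_iff]
      intro x hx
      rw [Submodule.mem_bot]
      have hx1 : x ∈ (C : Set (MonoidAlgebra F G)) := hx.1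
      have hx2 : ∀ c ∈ C, gaB x c = 0 := fun c hc => gaB_refl _ _ (hx.2 c hc)
      have : x ∈ (C : Set (MonoidAlgebra F G)) ∩
          gaDual (gaMu '' (C : Set (MonoidAlgebra F G))) :=
        ⟨hx1, (mem_gaDual_iff C x).2 hx2⟩
      rw [h] at this
      exact this
    have hcompl : IsCompl (C.restrictScalars F) D :=
      (LinearMap.BilinForm.restrict_nondegenerate_iff_isCompl_orthogonal gaB_refl).1
        (gaB.nondegenerate_restrict_of_disjoint_orthogonal gaB_refl hdisj)
    -- D is an ideal
    have hDmul : ∀ (r : MonoidAlgebra F G), ∀ d ∈ D, r * d ∈ D := by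
      intro r d hd c hc
      have h0 : gaB (c * r) d = 0 := hd (c * r) (C.mul_mem_right r hc)
      show gaB c (r * d) = 0
      rw [gaB_apply] at h0 ⊢
      rw [mul_assoc] at h0
      exact h0
    -- decompose 1
    obtain ⟨e, he, f, hf, hef⟩ : ∃ e ∈ C.restrictScalars F, ∃ f ∈ D, e + f = 1 := by
      have : (1 : MonoidAlgebra F G) ∈ (C.restrictScalars F) ⊔ D := by
        rw [hcompl.sup_eq_top]; trivial
      exact Submodule.mem_sup.1 this
    have hCD : ∀ x, x ∈ C.restrictScalars F → x ∈ D → x = 0 := by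
      intro x h1 h2
      have := hdisj.le_bot ⟨h1, h2⟩
      simpa using this
    refine ⟨e, ?_, ?_⟩
    · -- e idempotent: e = e*1 = e*e + e*f, and e*f ∈ C ∩ D
      have h1 : e * f ∈ C.restrictScalars F := C.mul_mem_right f he
      have h2 : e * f ∈ D := hDmul e f hf
      have h3 : e * f = 0 := hCD _ h1 h2
      have : e * e + e * f = e := by rw [← mul_add, hef, mul_one]
      rwa [h3, add_zero] at this
    · apply le_antisymm
      · intro c hc
        have h1 : c * f ∈ C.restrictScalars F := C.mul_mem_right f hc
        have h2 : c * f ∈ D := hDmul c f hf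
        have h3 : c * f = 0 := hCD _ h1 h2
        have : c * e + c * f = c := by rw [← mul_add, hef, mul_one]
        rw [h3, add_zero] at this
        rw [Ideal.mem_span_singleton]
        exact ⟨c, by rw [mul_comm, this]⟩
      · rw [Ideal.span_le, Set.singleton_subset_iff]
        exact he
  · rintro ⟨e, hee, rfl⟩
    apply Set.eq_singleton_iff_unique_mem.2
    refine ⟨⟨(Ideal.span {e}).zero_mem, fun c _ => by simp⟩, ?_⟩
    rintro a ⟨ha1, ha2⟩
    rw [mem_gaDual_iff] at ha2
    obtain ⟨r, rfl⟩ := Ideal.mem_span_singleton.1 ha1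
    have hae : e * r * e = e * r := by
      rw [mul_comm e r, mul_assoc, hee, mul_comm]
    ext g
    have h1 : e * MonoidAlgebra.single g⁻¹ (1 : F) ∈ Ideal.span {e} :=
      Ideal.mem_span_singleton.2 (Dvd.intro _ rfl)
    have := ha2 _ h1
    rw [gaB_apply, ← mul_assoc, hae, ← gaB_apply, gaB_mul_single, inv_inv] at this
    simpa using this
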